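/- For every real number z ≥ 2, ⌈log₂ z / log₂(z/(z−1))⌉ ≤ z · log₂ z, where log₂ denotes the base-2 logarithm and ⌈·⌉ the ceiling function. -/

import Mathlib

/-- For every real `z ≥ 2`,
`⌈log₂ z / log₂ (z/(z−1))⌉ ≤ z · log₂ z`. -/
theorem stmt_10 (z : ℝ) (hz : 2 ≤ z) :
    (⌈Real.logb 2 z / Real.logb 2 (z / (z - 1))⌉ : ℝ) ≤ z * Real.logb 2 z := by
  have hz1 : (1:ℝ) < z := by linarith
  have hzm : (0:ℝ) < z - 1 := by linarith
  have hzpos : (0:ℝ) < z := by linarith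
  have hw : 1 < z / (z - 1) := (one_lt_div hzm).2 (by linarith)
  have hwpos : 0 < z / (z - 1) := by linarith
  have hlogw : 0 < Real.logb 2 (z / (z - 1)) := Real.logb_pos (by norm_num) hw
  have hlogz1 : 1 ≤ Real.logb 2 z := by
    have := Real.logb_le_logb_of_le (b := 2) (by norm_num) (by norm_num) hz
    simpa using this
  rcases le_or_gt z 2.6 with hcase | hcase
  · -- small case: ceiling ≤ 2 ≤ z * logb 2 z
    have hx2 : Real.logb 2 z / Real.logb 2 (z / (z - 1)) ≤ 2 := by
      rw [div_le_iff₀ hlogw]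
      have hpow : z ≤ (z / (z - 1)) ^ 2 := by
        rw [div_pow, le_div_iff₀ (by positivity)]
        nlinarith [sq_nonneg (z - 1), mul_nonneg (sub_nonneg.2 hz) (sub_nonneg.2 hcase)]
      calc Real.logb 2 z ≤ Real.logb 2 ((z / (z - 1)) ^ 2) :=
            Real.logb_le_logb_of_le (by norm_num) hzpos hpow
        _ = 2 * Real.logb 2 (z / (z - 1)) := by
            rw [Real.logb_pow]; norm_num
    have hceil : (⌈Real.logb 2 z / Real.logb 2 (z / (z - 1))⌉ : ℝ) ≤ 2 := by
      have : ⌈Real.logb 2 z / Real.logb 2 (z / (z - 1))⌉ ≤ (2 : ℤ) :=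
        Int.ceil_le.2 (by exact_mod_cast hx2)
      exact_mod_cast this
    have : (2:ℝ) ≤ z * Real.logb 2 z := by nlinarith
    linarith
  · -- large case
    have hln2u : Real.log 2 < 0.6931471808 := Real.log_two_lt_d9
    have hln2l : 0.6931471803 < Real.log 2 := Real.log_two_gt_d9
    have hln2pos : (0:ℝ) < Real.log 2 := by linarith
    -- log (z/(z-1)) ≥ 1/z
    have hlow : 1 / z ≤ Real.log (z / (z - 1)) := by
      have h1 : Real.log ((z - 1) / z) ≤ (z - 1) / z - 1 :=
        Real.log_le_sub_one_of_pos (by positivity)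
      have h2 : Real.log ((z - 1) / z) = - Real.log (z / (z - 1)) := by
        rw [← Real.log_inv]
        congr 1
        field_simp
      have h3 : (z - 1) / z - 1 = - (1 / z) := by field_simp; ring
      rw [h2, h3] at h1
      linarith
    have hlogzpos : 0 < Real.log z := Real.log_pos hz1
    -- ratio in terms of log
    have hratio : Real.logb 2 z / Real.logb 2 (z / (z - 1))
        = Real.log z / Real.log (z / (z - 1)) := by
      rw [Real.logb, Real.logb]
      field_simp
    have hlwpos : 0 < Real.log (z / (z - 1)) := Real.log_pos hw
    have hxb : Real.log z / Real.log (z / (z - 1)) ≤ z * Real.log z := by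
      rw [div_le_iff₀ hlwpos]
      have : z * Real.log z * (1 / z) ≤ z * Real.log z * Real.log (z / (z - 1)) :=
        mul_le_mul_of_nonneg_left hlow (by positivity)
      calc Real.log z = z * Real.log z * (1 / z) := by field_simp
        _ ≤ _ := this
    -- lower bound on log z : log z ≥ log 2 + 3/13
    have hlz26 : Real.log 2 + 3/13 ≤ Real.log z := by
      have h13 : Real.log (10/13 : ℝ) ≤ 10/13 - 1 :=
        Real.log_le_sub_one_of_pos (by norm_num)
      have hinv : Real.log (10/13 : ℝ) = - Real.log (13/10 : ℝ) := by
        rw [← Real.log_inv]; norm_num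
      have h13l : (3:ℝ)/13 ≤ Real.log (13/10) := by
        rw [hinv] at h13; linarith
      have hm : Real.log ((2:ℝ) * (13/10)) = Real.log 2 + Real.log (13/10) :=
        Real.log_mul (by norm_num) (by norm_num)
      have : Real.log ((2:ℝ) * (13/10)) ≤ Real.log z :=
        Real.log_le_log (by norm_num) (by linarith)
      rw [hm] at this
      linarith
    have hlogzl : (0.9238:ℝ) ≤ Real.log z := by linarith
    -- final numeric step
    have hprod : (2.6:ℝ) * 0.9238 ≤ z * Real.log z := by
      have := mul_le_mul (le_of_lt hcase) hlogzl (by norm_num) (by linarith)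
      linarith
    have hfinal : z * Real.log z + 1 ≤ z * (Real.log z / Real.log 2) := by
      rw [mul_div_assoc', le_div_iff₀ hln2pos]
      nlinarith
    have hceil : (⌈Real.logb 2 z / Real.logb 2 (z / (z - 1))⌉ : ℝ)
        < Real.logb 2 z / Real.logb 2 (z / (z - 1)) + 1 := Int.ceil_lt_add_one _
    rw [hratio] at hceil
    have : z * Real.logb 2 z = z * (Real.log z / Real.log 2) := by rw [Real.logb]
    rw [hratio, this]
    linarith
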